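/- Let H be a separable complex Hilbert space, let p : [0,1] → B(H) be strongly continuous with each p(t) a nonzero projection, let f : [0,1] → H be norm continuous with f(t) ∈ range p(t) for every t, and let ε > 0. Then there exists a norm continuous g : [0,1] → H such that g(t) ∈ range p(t), ‖g(t) − f(t)‖ < ε, and g(t) ≠ 0 for every t ∈ [0,1]. (Every continuous vector field of a nowhere-vanishing continuous field of Hilbert spaces over a space of dimension at most one can be uniformly approximated by a nonvanishing continuous vector field.) -/

import Mathlib

open ContinuousLinearMap Module

local notation "⟪" x ", " y "⟫" => @inner ℂ _ _ x y

/-- A projection on a Hilbert space: a self-adjoint idempotent bounded operator. -/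
def IsProjection {H : Type*} [NormedAddCommGroup H] [InnerProductSpace ℂ H]
    [CompleteSpace H] (p : H →L[ℂ] H) : Prop :=
  IsSelfAdjoint p ∧ p * p = p


open Polynomial in
lemma nonvanishing_scalar_approx (a b : ℝ) (α : ℝ → ℂ) (hα : Continuous α)
    (δ : ℝ) (hδ : 0 < δ) :
    ∃ γ : ℝ → ℂ, Continuous γ ∧ ∀ t ∈ Set.Icc a b, γ t ≠ 0 ∧ ‖γ t - α t‖ < δ := by
  have hδ6 : 0 < δ/6 := by linarith
  obtain ⟨P, hP⟩ := exists_polynomial_near_of_continuousOn a b (fun t => (α t).re)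
    ((Complex.continuous_re.comp hα).continuousOn) (δ/6) hδ6
  obtain ⟨Q, hQ⟩ := exists_polynomial_near_of_continuousOn a b (fun t => (α t).im)
    ((Complex.continuous_im.comp hα).continuousOn) (δ/6) hδ6
  -- choose c₁ ∈ (0, δ/6) with P + C c₁ ≠ 0
  obtain ⟨c₁, hc₁mem, hc₁⟩ : ∃ c₁ ∈ Set.Ioo (0:ℝ) (δ/6), P + C c₁ ≠ 0 := by
    have hinf : (Set.Ioo (0:ℝ) (δ/6)).Infinite := Set.Ioo_infinite (by linarith)
    obtain ⟨c, hc, hcne⟩ := (hinf.diff (Set.finite_singleton (-(P.coeff 0)))).nonempty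
    refine ⟨c, hc, fun h => ?_⟩
    apply hcne
    have := congrArg (fun R => Polynomial.coeff R 0) h
    simp only [Polynomial.coeff_add, Polynomial.coeff_C_zero, Polynomial.coeff_zero] at this
    simp only [Set.mem_singleton_iff]
    linarith
  set R : Finset ℝ := (P + C c₁).roots.toFinset with hR
  obtain ⟨c₂, hc₂mem, hc₂⟩ : ∃ c₂ ∈ Set.Ioo (0:ℝ) (δ/6),
      ∀ r ∈ R, Q.eval r + c₂ ≠ 0 := by
    have hinf : (Set.Ioo (0:ℝ) (δ/6)).Infinite := Set.Ioo_infinite (by linarith)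
    obtain ⟨c, hc, hcne⟩ := (hinf.diff (R.finite_toSet.image (fun r => -(Q.eval r)))).nonempty
    refine ⟨c, hc, fun r hr h => ?_⟩
    refine hcne ⟨r, hr, ?_⟩
    show -(Q.eval r) = c
    linarith
  refine ⟨fun t => Complex.mk (P.eval t + c₁) (Q.eval t + c₂), ?_, ?_⟩
  · have : (fun t => Complex.mk (P.eval t + c₁) (Q.eval t + c₂))
        = fun t => ((P.eval t + c₁ : ℝ) : ℂ) + ((Q.eval t + c₂ : ℝ) : ℂ) * Complex.I := by
      funext t; rw [Complex.mk_eq_add_mul_I]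
    rw [this]
    exact ((Complex.continuous_ofReal.comp (P.continuous.add continuous_const)).add
      ((Complex.continuous_ofReal.comp (Q.continuous.add continuous_const)).mul continuous_const))
  · intro t ht
    constructor
    · intro h
      have hre : P.eval t + c₁ = 0 := congrArg Complex.re h
      have him : Q.eval t + c₂ = 0 := congrArg Complex.im h
      have htR : t ∈ R := by
        rw [hR, Multiset.mem_toFinset, Polynomial.mem_roots hc₁]
        simp [Polynomial.IsRoot, hre]
      exact hc₂ t htR him
    · have h1 : |P.eval t - (α t).re| < δ/6 := hP t ht
      have h2 : |Q.eval t - (α t).im| < δ/6 := hQ t ht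
      have key : ‖Complex.mk (P.eval t + c₁) (Q.eval t + c₂) - α t‖
          ≤ |P.eval t + c₁ - (α t).re| + |Q.eval t + c₂ - (α t).im| := by
        have h3 := Complex.norm_le_abs_re_add_abs_im
          (Complex.mk (P.eval t + c₁) (Q.eval t + c₂) - α t)
        simpa [Complex.sub_re, Complex.sub_im] using h3
      have e1 : |P.eval t + c₁ - (α t).re| < δ/3 := by
        rw [abs_lt] at h1 ⊢; obtain ⟨l, r⟩ := hc₁mem; constructor <;> linarith [h1.1, h1.2]
      have e2 : |Q.eval t + c₂ - (α t).im| < δ/3 := by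
        rw [abs_lt] at h2 ⊢; obtain ⟨l, r⟩ := hc₂mem; constructor <;> linarith [h2.1, h2.2]
      linarith

lemma IsProjection_norm_le {H : Type*} [NormedAddCommGroup H] [InnerProductSpace ℂ H]
    [CompleteSpace H] {q : H →L[ℂ] H} (hq : IsProjection q) (v : H) :
    ‖q v‖ ≤ ‖v‖ := by
  obtain ⟨hsa, hidem⟩ := hq
  have hadj : ContinuousLinearMap.adjoint q = q := hsa.adjoint_eq
  have h1 : ⟪q v, q v⟫ = ⟪v, q v⟫ := by
    have h0 := ContinuousLinearMap.adjoint_inner_left q (q v) v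
    rw [hadj] at h0
    calc ⟪q v, q v⟫ = ⟪v, q (q v)⟫ := h0
      _ = ⟪v, (q * q) v⟫ := rfl
      _ = ⟪v, q v⟫ := by rw [hidem]
  have h2 : (‖q v‖ : ℝ)^2 ≤ ‖v‖ * ‖q v‖ := by
    have := norm_inner_le_norm (𝕜 := ℂ) v (q v)
    calc (‖q v‖ : ℝ)^2 = ‖⟪q v, q v⟫‖ := by
          rw [inner_self_eq_norm_sq_to_K]; simp [pow_two]
      _ = ‖⟪v, q v⟫‖ := by rw [h1]
      _ ≤ ‖v‖ * ‖q v‖ := this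
  rcases eq_or_lt_of_le (norm_nonneg (q v)) with h | h
  · rw [← h]; exact norm_nonneg v
  · nlinarith


/-- Every continuous vector field of a nowhere-vanishing continuous field of Hilbert
spaces over `[0,1]` can be uniformly approximated by a nonvanishing continuous vector
field. -/
theorem exists_nonvanishing_section {H : Type*} [NormedAddCommGroup H]
    [InnerProductSpace ℂ H] [CompleteSpace H] [TopologicalSpace.SeparableSpace H]
    (p : Set.Icc (0:ℝ) 1 → H →L[ℂ] H)
    (hsc : ∀ v : H, Continuous fun t => p t v)
    (hproj : ∀ t, IsProjection (p t))
    (hne : ∀ t, p t ≠ 0)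
    (f : Set.Icc (0:ℝ) 1 → H)
    (hf : Continuous f)
    (hfmem : ∀ t, f t ∈ LinearMap.range (p t : H →ₗ[ℂ] H))
    (ε : ℝ) (hε : 0 < ε) :
    ∃ g : Set.Icc (0:ℝ) 1 → H,
      Continuous g ∧
      (∀ t, g t ∈ LinearMap.range (p t : H →ₗ[ℂ] H)) ∧
      (∀ t, ‖g t - f t‖ < ε) ∧
      (∀ t, g t ≠ 0) := by
  classical
  have hbd : ∀ (t : Set.Icc (0:ℝ) 1) (v : H), ‖p t v‖ ≤ ‖v‖ :=
    fun t v => IsProjection_norm_le (hproj t) v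
  -- local unit sections
  have hunit : ∀ s : Set.Icc (0:ℝ) 1, ∃ u : H, ‖u‖ = 1 ∧ p s u = u := by
    intro s
    have : ∃ v, p s v ≠ 0 := by
      by_contra h
      push_neg at h
      exact hne s (ContinuousLinearMap.ext fun v => by simpa using h v)
    obtain ⟨v, hv⟩ := this
    have hnv : ‖p s v‖ ≠ 0 := norm_ne_zero_iff.mpr hv
    refine ⟨((‖p s v‖ : ℂ))⁻¹ • (p s v), ?_, ?_⟩
    · rw [norm_smul]
      simp [hnv]
    · rw [map_smul]
      congr 1
      calc p s (p s v) = ((p s) * (p s)) v := rfl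
        _ = p s v := by rw [(hproj s).2]
  choose u hu1 hu2 using hunit
  -- open cover
  let V : Set.Icc (0:ℝ) 1 → Set (Set.Icc (0:ℝ) 1) :=
    fun s => {t | ‖p t (u s) - p s (u s)‖ < 1/4}
  have hVopen : ∀ s, IsOpen (V s) := by
    intro s
    have hc : Continuous fun t : Set.Icc (0:ℝ) 1 => ‖p t (u s) - p s (u s)‖ :=
      ((hsc (u s)).sub continuous_const).norm
    exact isOpen_lt hc continuous_const
  have hVcover : (Set.univ : Set (Set.Icc (0:ℝ) 1)) ⊆ ⋃ s, V s := by
    intro t _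
    refine Set.mem_iUnion.mpr ⟨t, ?_⟩
    simp [V]
  obtain ⟨δ, hδpos, hball⟩ := lebesgue_number_lemma_of_metric isCompact_univ hVopen hVcover
  obtain ⟨N, hNgt⟩ := exists_nat_gt (1/δ)
  have hNpos' : (0:ℝ) < N := lt_trans (by positivity) hNgt
  have hNpos : 0 < N := Nat.cast_pos.mp hNpos'
  have hN' : (1:ℝ)/N < δ := by
    rw [div_lt_iff₀ hNpos', mul_comm]
    exact (div_lt_iff₀ hδpos).mp hNgt
  -- main induction
  have key : ∀ k : ℕ, k ≤ N → ∃ g : Set.Icc (0:ℝ) 1 → H, Continuous g ∧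
      (∀ t, g t ∈ LinearMap.range (p t : H →ₗ[ℂ] H)) ∧
      (∀ t, ‖g t - f t‖ ≤ k * (ε/(2*N))) ∧
      (∀ t : Set.Icc (0:ℝ) 1, k ≠ 0 → (t:ℝ) ≤ k/N → g t ≠ 0) := by
    intro k
    induction k with
    | zero =>
      exact fun _ => ⟨f, hf, hfmem, by simp, fun t h0 _ => absurd rfl h0⟩
    | succ k ih =>
      intro hk1
      obtain ⟨g, hgc, hgmem, hgnorm, hgnz⟩ := ih (Nat.le_of_succ_le hk1)
      set aa : ℝ := k / N with haadef
      set bb : ℝ := ((k:ℝ)+1) / N with hbbdef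
      have haa0 : 0 ≤ aa := by positivity
      have hk1' : ((k:ℝ)+1) ≤ N := by exact_mod_cast hk1
      have hbb1 : bb ≤ 1 := by rw [hbbdef, div_le_one hNpos']; linarith
      have habb : aa ≤ bb := by
        rw [haadef, hbbdef, div_le_div_iff_of_pos_right hNpos']
        linarith
      have haa1 : aa ≤ 1 := le_trans habb hbb1
      have hdiff : bb - aa = 1/N := by rw [haadef, hbbdef]; ring
      -- covering element for the interval [aa, bb]
      obtain ⟨s, hs⟩ := hball ⟨aa, haa0, haa1⟩ (Set.mem_univ _)
      set w : H := u s with hw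
      have hew : Continuous fun t : Set.Icc (0:ℝ) 1 => p t w := hsc w
      have hwnorm : ∀ t : Set.Icc (0:ℝ) 1, ‖p t w‖ ≤ 1 := by
        intro t
        have h := hbd t w
        rw [hw, hu1 s] at h
        exact h
      have hK34 : ∀ t : Set.Icc (0:ℝ) 1, aa ≤ (t:ℝ) → (t:ℝ) ≤ bb → 3/4 ≤ ‖p t w‖ := by
        intro t h1 h2
        have htV : t ∈ V s := by
          apply hs
          rw [Metric.mem_ball, Subtype.dist_eq, Real.dist_eq]
          have : |(t:ℝ) - aa| ≤ 1/N := by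
            rw [abs_of_nonneg (by linarith)]
            linarith [hdiff]
          linarith
        have h3 : ‖p t w - p s w‖ < 1/4 := htV
        have h4 : ‖p s w‖ = 1 := by rw [hw, hu2 s, hu1 s]
        have h5 := norm_sub_norm_le (p s w) (p t w)
        rw [h4, norm_sub_rev] at h5
        linarith
      -- clamp map
      have hrm : ∀ t : Set.Icc (0:ℝ) 1, max aa (min bb (t:ℝ)) ∈ Set.Icc (0:ℝ) 1 := by
        intro t
        constructor
        · exact le_trans haa0 (le_max_left _ _)
        · exact max_le haa1 (le_trans (min_le_left _ _) hbb1)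
      set r : Set.Icc (0:ℝ) 1 → Set.Icc (0:ℝ) 1 :=
        fun t => ⟨max aa (min bb (t:ℝ)), hrm t⟩ with hrdef
      have hrcont : Continuous r :=
        Continuous.subtype_mk (continuous_const.max (continuous_const.min continuous_subtype_val)) _
      have hrmem : ∀ t, aa ≤ ((r t : Set.Icc (0:ℝ) 1) : ℝ) ∧ ((r t : Set.Icc (0:ℝ) 1) : ℝ) ≤ bb := by
        intro t
        exact ⟨le_max_left _ _, max_le habb (min_le_left _ _)⟩
      have hrid : ∀ t : Set.Icc (0:ℝ) 1, aa ≤ (t:ℝ) → (t:ℝ) ≤ bb → r t = t := by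
        intro t h1 h2
        apply Subtype.ext
        show max aa (min bb (t:ℝ)) = (t:ℝ)
        rw [min_eq_right h2, max_eq_right h1]
      have hrr : ∀ t, r (r t) = r t := fun t => hrid (r t) (hrmem t).1 (hrmem t).2
      -- the coefficient function
      set B : Set.Icc (0:ℝ) 1 → ℂ :=
        fun t => ⟪p (r t) w, g (r t)⟫ / (((‖p (r t) w‖ : ℝ) : ℂ))^2 with hBdef
      have hden : ∀ t, (((‖p (r t) w‖ : ℝ) : ℂ))^2 ≠ 0 := by
        intro t
        have := hK34 (r t) (hrmem t).1 (hrmem t).2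
        apply pow_ne_zero
        rw [Ne, Complex.ofReal_eq_zero]
        intro h
        rw [h] at this
        linarith
      have hBcont : Continuous B := by
        have h1 : Continuous fun t : Set.Icc (0:ℝ) 1 => p (r t) w := hew.comp hrcont
        have h2 : Continuous fun t : Set.Icc (0:ℝ) 1 => g (r t) := hgc.comp hrcont
        have h3 : Continuous fun t : Set.Icc (0:ℝ) 1 => ⟪p (r t) w, g (r t)⟫ :=
          Continuous.inner h1 h2
        have h4 : Continuous fun t : Set.Icc (0:ℝ) 1 => (((‖p (r t) w‖ : ℝ) : ℂ))^2 :=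
          (Complex.continuous_ofReal.comp h1.norm).pow 2
        exact h3.div h4 hden
      -- lower bound on previous region
      obtain ⟨M, hMpos, hM⟩ : ∃ M : ℝ, 0 < M ∧
          ∀ t : Set.Icc (0:ℝ) 1, k ≠ 0 → (t:ℝ) ≤ aa → M ≤ ‖g t‖ := by
        by_cases hk0 : k = 0
        · exact ⟨1, one_pos, fun t h0 _ => absurd hk0 h0⟩
        · have hCcl : IsClosed {t : Set.Icc (0:ℝ) 1 | (t:ℝ) ≤ aa} :=
            isClosed_le continuous_subtype_val continuous_const
          have hCcp : IsCompact {t : Set.Icc (0:ℝ) 1 | (t:ℝ) ≤ aa} := hCcl.isCompact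
          have hCne : {t : Set.Icc (0:ℝ) 1 | (t:ℝ) ≤ aa}.Nonempty :=
            ⟨⟨0, le_refl 0, zero_le_one⟩, haa0⟩
          obtain ⟨tm, htm, htmin⟩ := hCcp.exists_isMinOn hCne (hgc.norm.continuousOn)
          refine ⟨‖g tm‖, ?_, fun t _ ht => (isMinOn_iff.mp htmin) t ht⟩
          exact norm_pos_iff.mpr (hgnz tm hk0 htm)
      set δ' : ℝ := min (ε/(2*N)) (M/2) with hδ'def
      have hδ'pos : 0 < δ' := lt_min (by positivity) (by positivity)
      -- the scalar approximation
      set αr : ℝ → ℂ := fun x => B (Set.projIcc 0 1 zero_le_one x) with hαrdef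
      have hαrcont : Continuous αr := hBcont.comp continuous_projIcc
      obtain ⟨γ, hγc, hγ⟩ := nonvanishing_scalar_approx aa bb αr hαrcont δ' hδ'pos
      have hBr : ∀ t, αr ((r t : Set.Icc (0:ℝ) 1) : ℝ) = B t := by
        intro t
        show B (Set.projIcc 0 1 zero_le_one ((r t : Set.Icc (0:ℝ) 1) : ℝ)) = B t
        rw [Set.projIcc_val]
        show B (r t) = B t
        simp only [hBdef]
        rw [hrr t]
      have hcoef : ∀ t, ‖γ ((r t : Set.Icc (0:ℝ) 1) : ℝ) - B t‖ < δ' := by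
        intro t
        have h := (hγ ((r t : Set.Icc (0:ℝ) 1) : ℝ) ⟨(hrmem t).1, (hrmem t).2⟩).2
        rwa [hBr t] at h
      -- the new section
      set g' : Set.Icc (0:ℝ) 1 → H :=
        fun t => g t + (γ ((r t : Set.Icc (0:ℝ) 1) : ℝ) - B t) • (p t w) with hg'def
      have hg'c : Continuous g' := by
        apply hgc.add
        exact Continuous.smul ((hγc.comp (continuous_subtype_val.comp hrcont)).sub hBcont) hew
      have hpert : ∀ t, ‖(γ ((r t : Set.Icc (0:ℝ) 1) : ℝ) - B t) • (p t w)‖ ≤ δ' := by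
        intro t
        rw [norm_smul]
        calc ‖γ ((r t : Set.Icc (0:ℝ) 1) : ℝ) - B t‖ * ‖p t w‖ ≤ δ' * 1 :=
              mul_le_mul (le_of_lt (hcoef t)) (hwnorm t) (norm_nonneg _) (le_of_lt hδ'pos)
          _ = δ' := mul_one _
      refine ⟨g', hg'c, ?_, ?_, ?_⟩
      · intro t
        show g t + (γ ((r t : Set.Icc (0:ℝ) 1) : ℝ) - B t) • (p t w) ∈ LinearMap.range (p t : H →ₗ[ℂ] H)
        apply Submodule.add_mem _ (hgmem t)
        exact ⟨(γ ((r t : Set.Icc (0:ℝ) 1) : ℝ) - B t) • w, by rw [map_smul]; rfl⟩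
      · intro t
        have h1 : ‖g' t - f t‖ ≤ ‖g t - f t‖
            + ‖(γ ((r t : Set.Icc (0:ℝ) 1) : ℝ) - B t) • (p t w)‖ := by
          have he : g' t - f t = (g t - f t)
              + (γ ((r t : Set.Icc (0:ℝ) 1) : ℝ) - B t) • (p t w) := by
            simp only [hg'def]; abel
          rw [he]; exact norm_add_le _ _
        have h3 : δ' ≤ ε/(2*N) := min_le_left _ _
        have h4 := hgnorm t
        have h5 : ((k+1 : ℕ) : ℝ) * (ε/(2*N)) = (k:ℝ) * (ε/(2*N)) + ε/(2*N) := by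
          push_cast; ring
        rw [h5]
        linarith [hpert t]
      · intro t _ hle
        have hle' : (t:ℝ) ≤ bb := by
          rw [hbbdef]
          exact_mod_cast hle
        rcases le_or_gt aa (t:ℝ) with hge | hlt
        · -- new interval: inner product argument
          intro hzero
          have hrt : r t = t := hrid t hge hle'
          have hγt := hγ ((t:ℝ)) ⟨hge, hle'⟩
          have hdent : (((‖p t w‖ : ℝ) : ℂ))^2 ≠ 0 := by
            have hh := hden t
            rwa [hrt] at hh
          have hBt : B t = ⟪p t w, g t⟫ / (((‖p t w‖ : ℝ) : ℂ))^2 := by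
            simp only [hBdef, hrt]
          have hinner : ⟪p t w, g' t⟫ = γ ((t:ℝ)) * (((‖p t w‖ : ℝ) : ℂ))^2 := by
            have e1 : ⟪p t w, g' t⟫ = ⟪p t w, g t⟫
                + (γ ((r t : Set.Icc (0:ℝ) 1) : ℝ) - B t) * ⟪p t w, p t w⟫ := by
              simp only [hg'def]
              rw [inner_add_right, inner_smul_right]
            rw [e1, hrt, inner_self_eq_norm_sq_to_K, hBt]
            simp only [RCLike.ofReal_eq_complex_ofReal]
            rw [sub_mul, div_mul_cancel₀ _ hdent]; ring
          rw [hzero, inner_zero_right] at hinner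
          rcases mul_eq_zero.mp hinner.symm with h | h
          · exact hγt.1 h
          · exact hdent h
        · -- old region
          have hk0 : k ≠ 0 := by
            intro h0
            have haz : aa = 0 := by rw [haadef, h0]; simp
            rw [haz] at hlt
            linarith [t.2.1]
          have hMt := hM t hk0 (le_of_lt hlt)
          intro hzero
          have h5 : δ' ≤ M/2 := min_le_right _ _
          have h6 : ‖g t‖ ≤ ‖(γ ((r t : Set.Icc (0:ℝ) 1) : ℝ) - B t) • (p t w)‖ := by
            have he : g t = -((γ ((r t : Set.Icc (0:ℝ) 1) : ℝ) - B t) • (p t w)) := by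
              have hz : g t + (γ ((r t : Set.Icc (0:ℝ) 1) : ℝ) - B t) • (p t w) = 0 := hzero
              rw [add_eq_zero_iff_eq_neg] at hz
              exact hz
            rw [he, norm_neg]
          linarith [hpert t]
  obtain ⟨g, hgc, hgmem, hgnorm, hgnz⟩ := key N le_rfl
  refine ⟨g, hgc, hgmem, fun t => lt_of_le_of_lt (hgnorm t) ?_, fun t => ?_⟩
  · have he : (N:ℝ) * (ε/(2*N)) = ε/2 := by field_simp
    rw [he]; linarith
  · apply hgnz t (by omega : N ≠ 0)
    rw [div_self (ne_of_gt hNpos')]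
    exact t.2.2
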